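/- Let G be a planar graph, let v be a vertex of G with distinct neighbours u and w, and suppose some induced 6-cycle of G contains the path u–v–w. Write X₁ = X₁^{uvw}, X₂ = X₂^{uvw}, X₃ = X₃^{uvw}. Then the bipartite subgraph of G induced between X₁ and X₂ contains no cycle, the bipartite subgraph of G induced between X₂ and X₃ contains no cycle, and the number of induced 6-cycles of G containing the path u–v–w is at most |X₃|·(|X₁| + |X₂| − 1) and also at most |X₁|·(|X₂| + |X₃| − 1). -/

import Mathlib

open SimpleGraph

/-- `H` is a minor of `G`: there is a family of nonempty, connected, pairwise disjoint
branch sets in `G`, one for each vertex of `H`, such that adjacent vertices of `H`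
have adjacent branch sets. -/
def IsMinorOf {W : Type*} {V : Type*} (H : SimpleGraph W) (G : SimpleGraph V) : Prop :=
  ∃ φ : W → Set V,
    (∀ w, (G.induce (φ w)).Connected) ∧
    (Pairwise fun w₁ w₂ => Disjoint (φ w₁) (φ w₂)) ∧
    ∀ ⦃w₁ w₂⦄, H.Adj w₁ w₂ → ∃ x ∈ φ w₁, ∃ y ∈ φ w₂, G.Adj x y

/-- A graph is planar iff (by Wagner's theorem) it has no `K₅` minor and no `K₃,₃` minor. -/
def SimpleGraph.Planar {V : Type*} (G : SimpleGraph V) : Prop :=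
  ¬ IsMinorOf (completeGraph (Fin 5)) G ∧
  ¬ IsMinorOf (completeBipartiteGraph (Fin 3) (Fin 3)) G

/-- `s` is a set of `m` vertices of `G` whose induced subgraph is a cycle of length `m`. -/
def IsIndCycle {V : Type*} (G : SimpleGraph V) (m : ℕ) (s : Finset V) : Prop :=
  s.card = m ∧ Nonempty ((G.induce (s : Set V)) ≃g (cycleGraph m))

/-- The number of induced 6-cycles of `G`. -/
noncomputable def c6Count {V : Type*} [Fintype V] (G : SimpleGraph V) : ℕ :=
  {s : Finset V | IsIndCycle G 6 s}.ncard

/-- The number of induced 6-cycles of `G` containing the vertex `v`. -/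
noncomputable def c6CountAt {V : Type*} [Fintype V] (G : SimpleGraph V) (v : V) : ℕ :=
  {s : Finset V | IsIndCycle G 6 s ∧ v ∈ s}.ncard

/-- `f_I(n, C₆)`: the maximum number of induced 6-cycles over all planar graphs
on `n` vertices. -/
noncomputable def fI (n : ℕ) : ℕ :=
  sSup {m | ∃ G : SimpleGraph (Fin n), G.Planar ∧ c6Count G = m}

def h0 (n : ℕ) : ℕ :=
  if n % 3 = 0 then (n / 3 - 1) ^ 3
  else if n % 3 = 1 then ((n - 4) / 3) ^ 2 * ((n - 1) / 3)
  else ((n - 2) / 3) ^ 2 * ((n - 5) / 3)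

def h1 (n : ℕ) : ℕ :=
  if n % 3 = 0 then (n / 3 - 1) ^ 2
  else if n % 3 = 1 then ((n - 4) / 3) ^ 2
  else ((n - 2) / 3) * ((n - 5) / 3)

/-- `x` and `y` are principal neighbours in `G`: they are adjacent and some induced
6-cycle of `G` contains both of them. -/
def PrincipalNbr {V : Type*} (G : SimpleGraph V) (x y : V) : Prop :=
  G.Adj x y ∧ ∃ s : Finset V, IsIndCycle G 6 s ∧ x ∈ s ∧ y ∈ s

/-- `X^{uvw}`: the vertices of `G - {u,v,w}` lying in some induced 6-cycle of `G`
containing the path `u-v-w` (i.e. containing `u`, `v` and `w`). -/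
def Xset {V : Type*} (G : SimpleGraph V) (u v w : V) : Set V :=
  {x | x ≠ u ∧ x ≠ v ∧ x ≠ w ∧
    ∃ s : Finset V, IsIndCycle G 6 s ∧ u ∈ s ∧ v ∈ s ∧ w ∈ s ∧ x ∈ s}

def X1set {V : Type*} (G : SimpleGraph V) (u v w : V) : Set V :=
  Xset G u v w ∩ G.neighborSet u

def X3set {V : Type*} (G : SimpleGraph V) (u v w : V) : Set V :=
  Xset G u v w ∩ G.neighborSet w

def X2set {V : Type*} (G : SimpleGraph V) (u v w : V) : Set V :=
  Xset G u v w \ (X1set G u v w ∪ X3set G u v w)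

/-- The bipartite subgraph of `G` induced between the disjoint vertex sets `S` and `T`:
the graph on `S ∪ T` whose edges are exactly the edges of `G` with one endpoint in `S`
and one in `T`. -/
def bipBetween {V : Type*} (G : SimpleGraph V) (S T : Set V) : SimpleGraph ↑(S ∪ T) where
  Adj x y := G.Adj x y ∧ ((↑x ∈ S ∧ ↑y ∈ T) ∨ (↑x ∈ T ∧ ↑y ∈ S))
  symm := by
    constructor
    intro x y ⟨h, h2⟩
    exact ⟨h.symm, (h2.imp And.symm And.symm).symm⟩
  loopless := by
    constructor
    intro x ⟨h, _⟩
    exact G.loopless.irrefl _ h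

/-- `a b c d e f` are the vertices, in cyclic order, of an induced 6-cycle of `G`. -/
def IsIndC6On {V : Type*} [DecidableEq V] (G : SimpleGraph V) (a b c d e f : V) : Prop :=
  ([a, b, c, d, e, f] : List V).Nodup ∧
  IsIndCycle G 6 {a, b, c, d, e, f} ∧
  G.Adj a b ∧ G.Adj b c ∧ G.Adj c d ∧ G.Adj d e ∧ G.Adj e f ∧ G.Adj f a ∧
  ¬ G.Adj a c ∧ ¬ G.Adj a d ∧ ¬ G.Adj a e ∧
  ¬ G.Adj b d ∧ ¬ G.Adj b e ∧ ¬ G.Adj b f ∧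
  ¬ G.Adj c e ∧ ¬ G.Adj c f ∧ ¬ G.Adj d f

/-- `x` and `y` are consecutive entries (in either order) of the list `l`. -/
def ListConsec {V : Type*} (l : List V) (x y : V) : Prop :=
  ∃ i : ℕ, (l[i]? = some x ∧ l[i + 1]? = some y) ∨
           (l[i]? = some y ∧ l[i + 1]? = some x)

/-- The data witnessing that `G` belongs to the family `𝓕_n` (with `n = Fintype.card V`):
the vertex set is partitioned as `{u₁,u₂,u₃} ∪ A ∪ B ∪ C` with `|A|, |B|, |C|` as equal
as possible, every vertex of `A` is joined to `u₁, u₂`, every vertex of `B` to `u₂, u₃`,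
every vertex of `C` to `u₃, u₁`, and all remaining edges are consecutive along some
fixed orderings (paths) of `A`, `B`, `C`. -/
def FWitness {V : Type*} [Fintype V] [DecidableEq V] (G : SimpleGraph V) (u1 u2 u3 : V)
    (A B C : Finset V) : Prop :=
  u1 ≠ u2 ∧ u1 ≠ u3 ∧ u2 ≠ u3 ∧
  u1 ∉ A ∪ B ∪ C ∧ u2 ∉ A ∪ B ∪ C ∧ u3 ∉ A ∪ B ∪ C ∧
  Disjoint A B ∧ Disjoint A C ∧ Disjoint B C ∧
  ({u1, u2, u3} : Finset V) ∪ A ∪ B ∪ C = Finset.univ ∧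
  A.card + B.card + C.card = Fintype.card V - 3 ∧
  A.card ≤ B.card + 1 ∧ B.card ≤ A.card + 1 ∧
  A.card ≤ C.card + 1 ∧ C.card ≤ A.card + 1 ∧
  B.card ≤ C.card + 1 ∧ C.card ≤ B.card + 1 ∧
  (∀ a ∈ A, G.Adj u1 a ∧ G.Adj u2 a) ∧
  (∀ b ∈ B, G.Adj u2 b ∧ G.Adj u3 b) ∧
  (∀ c ∈ C, G.Adj u3 c ∧ G.Adj u1 c) ∧
  ∃ la lb lc : List V,
    la.Nodup ∧ lb.Nodup ∧ lc.Nodup ∧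
    la.toFinset = A ∧ lb.toFinset = B ∧ lc.toFinset = C ∧
    ∀ x y, G.Adj x y →
      (x = u1 ∧ (y ∈ A ∨ y ∈ C)) ∨ (y = u1 ∧ (x ∈ A ∨ x ∈ C)) ∨
      (x = u2 ∧ (y ∈ A ∨ y ∈ B)) ∨ (y = u2 ∧ (x ∈ A ∨ x ∈ B)) ∨
      (x = u3 ∧ (y ∈ B ∨ y ∈ C)) ∨ (y = u3 ∧ (x ∈ B ∨ x ∈ C)) ∨
      ListConsec la x y ∨ ListConsec lb x y ∨ ListConsec lc x y

/-- `G` belongs to the family `𝓕_n`, where `n = Fintype.card V`. -/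
def InFFamily {V : Type*} [Fintype V] [DecidableEq V] (G : SimpleGraph V) : Prop :=
  ∃ (u1 u2 u3 : V) (A B C : Finset V), FWitness G u1 u2 u3 A B C


-- ===================== auxiliary lemmas =====================

set_option maxHeartbeats 1000000 in
private lemma fin6_claim : ∀ a b c : Fin 6, (cycleGraph 6).Adj a b → (cycleGraph 6).Adj a c → b ≠ c →
    ∃ p q r : Fin 6, ([b, a, c, p, q, r] : List (Fin 6)).Nodup ∧
      (cycleGraph 6).Adj b r ∧ (cycleGraph 6).Adj r q ∧ (cycleGraph 6).Adj q p ∧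
      (cycleGraph 6).Adj c p ∧
      ¬(cycleGraph 6).Adj b c ∧ ¬(cycleGraph 6).Adj b p ∧ ¬(cycleGraph 6).Adj b q ∧
      ¬(cycleGraph 6).Adj a p ∧ ¬(cycleGraph 6).Adj a q ∧ ¬(cycleGraph 6).Adj a r ∧
      ¬(cycleGraph 6).Adj c q ∧ ¬(cycleGraph 6).Adj c r ∧ ¬(cycleGraph 6).Adj p r := by
  decide

/-- `t = (x, y, z)` positions: cycle `u-v-w-x-y-z`. -/
def Decomp {V : Type*} [DecidableEq V] (G : SimpleGraph V) (u v w : V) (s : Finset V)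
    (t : V × V × V) : Prop :=
  s = {u, v, w, t.1, t.2.1, t.2.2} ∧ ([u, v, w, t.1, t.2.1, t.2.2] : List V).Nodup ∧
  G.Adj u t.2.2 ∧ G.Adj t.2.2 t.2.1 ∧ G.Adj t.2.1 t.1 ∧ G.Adj w t.1 ∧
  ¬G.Adj u w ∧ ¬G.Adj u t.1 ∧ ¬G.Adj u t.2.1 ∧ ¬G.Adj v t.1 ∧ ¬G.Adj v t.2.1 ∧
  ¬G.Adj v t.2.2 ∧ ¬G.Adj w t.2.1 ∧ ¬G.Adj w t.2.2 ∧ ¬G.Adj t.1 t.2.2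

lemma struct {V : Type*} [DecidableEq V] {G : SimpleGraph V} {u v w : V}
    (hu : G.Adj v u) (hw : G.Adj v w) (huw : u ≠ w) {s : Finset V}
    (hs : IsIndCycle G 6 s) (hus : u ∈ s) (hvs : v ∈ s) (hws : w ∈ s) :
    ∃ t : V × V × V, Decomp G u v w s t := by
  classical
  obtain ⟨hcard, ⟨e⟩⟩ := hs
  set a : Fin 6 := e ⟨v, hvs⟩ with ha
  set b : Fin 6 := e ⟨u, hus⟩ with hb
  set c : Fin 6 := e ⟨w, hws⟩ with hc
  have hab : (cycleGraph 6).Adj a b := by rw [ha, hb, e.map_adj_iff]; exact hu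
  have hac : (cycleGraph 6).Adj a c := by rw [ha, hc, e.map_adj_iff]; exact hw
  have hbc : b ≠ c := by
    intro h
    exact huw (congrArg Subtype.val (e.toEquiv.injective (hb ▸ hc ▸ h)))
  obtain ⟨p, q, r, hnd, A1, A2, A3, A4, N1, N2, N3, N4, N5, N6, N7, N8, N9⟩ :=
    fin6_claim a b c hab hac hbc
  have hAdj : ∀ i j : Fin 6, (cycleGraph 6).Adj i j ↔ G.Adj ↑(e.symm i) ↑(e.symm j) := by
    intro i j
    rw [← e.symm.map_adj_iff]
    rfl
  have e1 : u = ↑(e.symm b) := by rw [hb]; simp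
  have e2 : v = ↑(e.symm a) := by rw [ha]; simp
  have e3 : w = ↑(e.symm c) := by rw [hc]; simp
  have hinj : Function.Injective (fun i : Fin 6 => (↑(e.symm i) : V)) := by
    intro i j h
    exact e.symm.toEquiv.injective (Subtype.val_injective h)
  have hnodup : ([u, v, w, ↑(e.symm p), ↑(e.symm q), ↑(e.symm r)] : List V).Nodup := by
    rw [e1, e2, e3]
    have : ([(↑(e.symm b) : V), ↑(e.symm a), ↑(e.symm c), ↑(e.symm p), ↑(e.symm q), ↑(e.symm r)])
        = List.map (fun i : Fin 6 => (↑(e.symm i) : V)) [b, a, c, p, q, r] := by simp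
    rw [this]
    exact hnd.map hinj
  refine ⟨(↑(e.symm p), ↑(e.symm q), ↑(e.symm r)), ?_, hnodup, ?_, ?_, ?_, ?_, ?_, ?_, ?_,
    ?_, ?_, ?_, ?_, ?_, ?_⟩
  · have hsub : ({u, v, w, ↑(e.symm p), ↑(e.symm q), ↑(e.symm r)} : Finset V) ⊆ s := by
      intro t ht
      simp only [Finset.mem_insert, Finset.mem_singleton] at ht
      rcases ht with rfl|rfl|rfl|rfl|rfl|rfl
      exacts [hus, hvs, hws, (e.symm p).2, (e.symm q).2, (e.symm r).2]
    have hcard' : ({u, v, w, ↑(e.symm p), ↑(e.symm q), ↑(e.symm r)} : Finset V).card = 6 := by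
      have := List.toFinset_card_of_nodup hnodup
      simpa using this
    exact (Finset.eq_of_subset_of_card_le hsub (by rw [hcard', hcard])).symm
  · rw [e1]; exact (hAdj _ _).mp A1
  · exact (hAdj _ _).mp A2
  · exact (hAdj _ _).mp A3
  · rw [e3]; exact (hAdj _ _).mp A4
  · rw [e1, e3]; exact fun h => N1 ((hAdj _ _).mpr h)
  · rw [e1]; exact fun h => N2 ((hAdj _ _).mpr h)
  · rw [e1]; exact fun h => N3 ((hAdj _ _).mpr h)
  · rw [e2]; exact fun h => N4 ((hAdj _ _).mpr h)
  · rw [e2]; exact fun h => N5 ((hAdj _ _).mpr h)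
  · rw [e2]; exact fun h => N6 ((hAdj _ _).mpr h)
  · rw [e3]; exact fun h => N7 ((hAdj _ _).mpr h)
  · rw [e3]; exact fun h => N8 ((hAdj _ _).mpr h)
  · exact fun h => N9 ((hAdj _ _).mpr h)

section XLemmas
variable {V : Type*} [DecidableEq V] {G : SimpleGraph V} {u v w : V}
  (hu : G.Adj v u) (hw : G.Adj v w) (huw : u ≠ w)
include hu hw huw

omit hu hw huw in lemma decomp_mem {s : Finset V} (hs : IsIndCycle G 6 s) (hus : u ∈ s) (hvs : v ∈ s)
    (hws : w ∈ s) {t : V × V × V} (hd : Decomp G u v w s t) :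
    t.1 ∈ X3set G u v w ∧ t.2.1 ∈ X2set G u v w ∧ t.2.2 ∈ X1set G u v w := by
  obtain ⟨hseq, hnd, A1, A2, A3, A4, N1, N2, N3, N4, N5, N6, N7, N8, N9⟩ := hd
  simp only [List.nodup_cons, List.mem_cons, List.not_mem_nil, or_false,
    List.mem_singleton, not_or, List.nodup_nil, and_true] at hnd
  obtain ⟨⟨d1, d2, d3, d4, d5⟩, ⟨d6, d7, d8, d9⟩, ⟨d10, d11, d12⟩, ⟨d13, d14⟩, d15⟩ := hnd
  have hxs : t.1 ∈ s := by rw [hseq]; simp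
  have hys : t.2.1 ∈ s := by rw [hseq]; simp
  have hzs : t.2.2 ∈ s := by rw [hseq]; simp
  have hxX : t.1 ∈ Xset G u v w :=
    ⟨Ne.symm d3, Ne.symm d7, Ne.symm d10, s, hs, hus, hvs, hws, hxs⟩
  have hyX : t.2.1 ∈ Xset G u v w :=
    ⟨Ne.symm d4, Ne.symm d8, Ne.symm d11, s, hs, hus, hvs, hws, hys⟩
  have hzX : t.2.2 ∈ Xset G u v w :=
    ⟨Ne.symm d5, Ne.symm d9, Ne.symm d12, s, hs, hus, hvs, hws, hzs⟩
  refine ⟨⟨hxX, A4⟩, ⟨hyX, ?_⟩, ⟨hzX, A1⟩⟩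
  rintro (⟨-, h⟩ | ⟨-, h⟩)
  · exact N3 h
  · exact N7 h

/-- Each element of `X` lying in a given induced 6-cycle through `u,v,w` is one of the three
decomposition vertices. -/
lemma mem_cases {a : V} (ha : a ∈ Xset G u v w) :
    ∃ s t, IsIndCycle G 6 s ∧ u ∈ s ∧ v ∈ s ∧ w ∈ s ∧ Decomp G u v w s t ∧
      (a = t.1 ∨ a = t.2.1 ∨ a = t.2.2) := by
  obtain ⟨hau, hav, haw, s, hs, hus, hvs, hws, has⟩ := ha
  obtain ⟨t, hd⟩ := struct hu hw huw hs hus hvs hws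
  refine ⟨s, t, hs, hus, hvs, hws, hd, ?_⟩
  rw [hd.1] at has
  simp only [Finset.mem_insert, Finset.mem_singleton] at has
  tauto

lemma adj_u_not_adj_w {a : V} (ha : a ∈ Xset G u v w) (hadj : G.Adj u a) : ¬G.Adj w a := by
  obtain ⟨s, t, hs, hus, hvs, hws, hd, hcase⟩ := mem_cases hu hw huw ha
  obtain ⟨-, -, A1, A2, A3, A4, N1, N2, N3, N4, N5, N6, N7, N8, N9⟩ := hd
  rcases hcase with rfl | rfl | rfl
  · exact absurd hadj N2
  · exact absurd hadj N3
  · exact N8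

lemma X2_nbrs {a : V} (ha : a ∈ X2set G u v w) :
    (∃ b ∈ X1set G u v w, G.Adj a b) ∧ (∃ b ∈ X3set G u v w, G.Adj a b) := by
  obtain ⟨haX, hnot⟩ := ha
  have hnu : ¬G.Adj u a := fun h => hnot (Or.inl ⟨haX, h⟩)
  have hnw : ¬G.Adj w a := fun h => hnot (Or.inr ⟨haX, h⟩)
  obtain ⟨s, t, hs, hus, hvs, hws, hd, hcase⟩ := mem_cases hu hw huw haX
  have hmem := decomp_mem hs hus hvs hws hd
  obtain ⟨-, -, A1, A2, A3, A4, N1, N2, N3, N4, N5, N6, N7, N8, N9⟩ := hd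
  rcases hcase with rfl | rfl | rfl
  · exact absurd A4 hnw
  · exact ⟨⟨t.2.2, hmem.2.2, A2.symm⟩, ⟨t.1, hmem.1, A3⟩⟩
  · exact absurd A1 hnu

omit [DecidableEq V] hu hw huw in lemma X1_disj_X2 : Disjoint (X1set G u v w) (X2set G u v w) := by
  rw [Set.disjoint_left]
  rintro a ha ⟨-, hnot⟩
  exact hnot (Or.inl ha)

omit [DecidableEq V] hu hw huw in lemma X3_disj_X2 : Disjoint (X3set G u v w) (X2set G u v w) := by
  rw [Set.disjoint_left]
  rintro a ha ⟨-, hnot⟩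
  exact hnot (Or.inr ha)

lemma X1_disj_X3 : Disjoint (X1set G u v w) (X3set G u v w) := by
  rw [Set.disjoint_left]
  rintro a ⟨haX, ha1⟩ ⟨-, ha3⟩
  exact adj_u_not_adj_w hu hw huw haX ha1 ha3

omit [DecidableEq V] hu hw huw in lemma Xset_comm : Xset G u v w = Xset G w v u := by
  ext a
  constructor <;> rintro ⟨h1, h2, h3, s, hs, h4, h5, h6, h7⟩
  · exact ⟨h3, h2, h1, s, hs, h6, h5, h4, h7⟩
  · exact ⟨h3, h2, h1, s, hs, h6, h5, h4, h7⟩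

omit [DecidableEq V] hu hw huw in lemma X1_swap : X1set G w v u = X3set G u v w := by
  rw [X1set, X3set, Xset_comm]

omit [DecidableEq V] hu hw huw in lemma X2_swap : X2set G w v u = X2set G u v w := by
  rw [X2set, X2set, Xset_comm, X1set, X3set, X1set, X3set, Xset_comm (u := u)]
  rw [Set.union_comm]

end XLemmas

section Forest
variable {W : Type*} [Fintype W] {H : SimpleGraph W}

/-- In a finite forest, any set of ordered pairs of adjacent vertices containing no pair
together with its reverse has size at most `|W| - 1`. -/
lemma forest_pairs_bound [Nonempty W] (hH : H.IsAcyclic) (P : Set (W × W))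
    (hadj : ∀ p ∈ P, H.Adj p.1 p.2) (hrev : ∀ p ∈ P, (p.2, p.1) ∉ P) :
    P.ncard + 1 ≤ Fintype.card W := by
  classical
  -- roots
  set rt : W → W := fun t => (H.connectedComponentMk t).out with hrt
  have hmk_rt : ∀ t, H.connectedComponentMk (rt t) = H.connectedComponentMk t := fun t =>
    Quot.out_eq _
  have hreach : ∀ t, H.Reachable t (rt t) := fun t =>
    (SimpleGraph.ConnectedComponent.exact (hmk_rt t)).symm
  have hrt_idem : ∀ t, rt (rt t) = rt t := by
    intro t
    show (H.connectedComponentMk (rt t)).out = _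
    rw [hmk_rt t]
  -- unique paths to roots
  have pth : ∀ t, H.Path t (rt t) := fun t => (hreach t).some.toPath
  have upath : ∀ (a : W) (p : H.Walk a (rt a)), p.IsPath → p = (pth a).1 := by
    intro a p hp
    exact congrArg Subtype.val (hH.path_unique ⟨p, hp⟩ (pth a))
  have aux : ∀ (a b : W) (hab : a = b) (p : H.Walk a b), p.IsPath → p.getVert 1 = a := by
    intro a b hab
    subst hab
    intro p hp
    have : (⟨p, hp⟩ : H.Path a a) = SimpleGraph.Path.nil := SimpleGraph.Path.loop_eq _
    have hpn : p = SimpleGraph.Walk.nil := congrArg Subtype.val this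
    subst hpn
    simp [SimpleGraph.Walk.getVert]
  -- the set of "child-parent" pairs
  set D : Set (W × W) := {p | H.Adj p.1 p.2 ∧ ((pth p.1).1).getVert 1 = p.2} with hD
  have key : ∀ x y : W, H.Adj x y → (x, y) ∈ D ∨ (y, x) ∈ D := by
    intro x y hxy
    have hrteq : rt x = rt y := by
      show (H.connectedComponentMk x).out = (H.connectedComponentMk y).out
      rw [SimpleGraph.ConnectedComponent.sound hxy.reachable]
    by_cases hmem : x ∈ ((pth y).1).support
    · right
      refine ⟨hxy.symm, ?_⟩
      have h1 : ((pth y).1.takeUntil x hmem).IsPath := (pth y).2.takeUntil hmem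
      have h2 : (SimpleGraph.Walk.cons hxy.symm SimpleGraph.Walk.nil : H.Walk y x).IsPath := by
        simp [SimpleGraph.Walk.isPath_iff_eq_nil, hxy.ne']
      have h3 : (pth y).1.takeUntil x hmem = SimpleGraph.Walk.cons hxy.symm SimpleGraph.Walk.nil := by
        have := hH.path_unique ⟨(pth y).1.takeUntil x hmem, h1⟩ ⟨_, h2⟩
        exact congrArg Subtype.val this
      conv_lhs => rw [← (pth y).1.take_spec hmem]
      rw [h3]
      simp [SimpleGraph.Walk.getVert_cons_succ, SimpleGraph.Walk.getVert_zero]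
    · left
      refine ⟨hxy, ?_⟩
      have hpath : (SimpleGraph.Walk.cons hxy (pth y).1).IsPath := (pth y).2.cons hmem
      have hcast : ((SimpleGraph.Walk.cons hxy (pth y).1).copy rfl hrteq.symm).IsPath := by
        simpa using hpath
      have := upath x _ hcast
      rw [← this]
      simp [SimpleGraph.Walk.getVert_cons_succ, SimpleGraph.Walk.getVert_zero]
  -- pairs in D avoid roots, and D is "functional"
  have hfun : ∀ p q : W × W, p ∈ D → q ∈ D → p.1 = q.1 → p.2 = q.2 := by
    rintro p q ⟨-, h1⟩ ⟨-, h2⟩ heq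
    rw [← h1, ← h2, heq]
  have hnroot : ∀ p : W × W, p ∈ D → p.1 ≠ rt p.1 := by
    rintro p ⟨hxy, h1⟩ heq
    have := aux p.1 (rt p.1) heq (pth p.1).1 (pth p.1).2
    exact hxy.ne (this.symm.trans h1)
  -- injection from P to non-root vertices
  set f : W × W → W := fun p => if p ∈ D then p.1 else p.2 with hf
  set S : Set W := {t | t ≠ rt t} with hS
  have etaD : ∀ p : W × W, (p.1, p.2) ∈ D ↔ p ∈ D := by intro p; rw [Prod.mk.eta]
  have hmaps : ∀ p ∈ P, f p ∈ S := by
    intro p hp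
    by_cases hd : p ∈ D
    · simp only [hf, if_pos hd]
      exact hnroot _ hd
    · simp only [hf, if_neg hd]
      rcases key p.1 p.2 (hadj p hp) with h | h
      · exact absurd ((etaD p).mp h) hd
      · exact hnroot _ h
  have hinj : Set.InjOn f P := by
    intro p hp q hq hfpq
    by_cases hpD : p ∈ D <;> by_cases hqD : q ∈ D <;>
      simp only [hf, if_pos, if_neg, hpD, hqD, if_true, if_false] at hfpq
    · exact Prod.ext hfpq (hfun p q hpD hqD hfpq)
    · rcases key q.1 q.2 (hadj q hq) with h | h
      · exact absurd ((etaD q).mp h) hqD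
      · exfalso
        have h2 : (q.2, q.1).2 = p.2 := hfun _ _ h ((etaD p).mpr hpD) hfpq.symm
        apply hrev p hp
        have : (p.2, p.1) = q := Prod.ext h2.symm hfpq
        rw [this]
        exact hq
    · rcases key p.1 p.2 (hadj p hp) with h | h
      · exact absurd ((etaD p).mp h) hpD
      · exfalso
        have h2 : (p.2, p.1).2 = q.2 := hfun _ _ h ((etaD q).mpr hqD) hfpq
        apply hrev q hq
        have : (q.2, q.1) = p := Prod.ext h2.symm hfpq.symm
        rw [this]
        exact hp
    · rcases key p.1 p.2 (hadj p hp) with h | h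
      · exact absurd ((etaD p).mp h) hpD
      · rcases key q.1 q.2 (hadj q hq) with h' | h'
        · exact absurd ((etaD q).mp h') hqD
        · have h2 : (p.2, p.1).2 = (q.2, q.1).2 := hfun _ _ h h' hfpq
          exact Prod.ext h2 hfpq
  have hcard1 : P.ncard ≤ S.ncard :=
    Set.ncard_le_ncard_of_injOn f hmaps hinj S.toFinite
  have t0 := Classical.arbitrary W
  have hsub : S ⊆ ({rt t0} : Set W)ᶜ := by
    intro t ht hceq
    rw [Set.mem_singleton_iff] at hceq
    apply ht
    rw [hceq, hrt_idem]
  have hcard2 : S.ncard ≤ (({rt t0} : Set W)ᶜ).ncard :=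
    Set.ncard_le_ncard hsub (Set.toFinite _)
  have hcard3 : ({rt t0} : Set W).ncard + (({rt t0} : Set W)ᶜ).ncard = Fintype.card W := by
    rw [Set.ncard_add_ncard_compl, Nat.card_eq_fintype_card]
  rw [Set.ncard_singleton] at hcard3
  omega

end Forest

-- helpers
lemma induce_star_connected {V : Type*} (G : SimpleGraph V) (S : Set V) (w0 : V) (hw : w0 ∈ S)
    (h : ∀ t ∈ S, t = w0 ∨ G.Adj w0 t) : (G.induce S).Connected := by
  rw [connected_iff]
  refine ⟨?_, ⟨⟨w0, hw⟩⟩⟩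
  have hkey : ∀ x : S, (G.induce S).Reachable x ⟨w0, hw⟩ := by
    rintro ⟨x, hx⟩
    rcases h x hx with rfl | hadj
    · exact Reachable.refl _
    · have : (G.induce S).Adj ⟨x, hx⟩ ⟨w0, hw⟩ := by
        simp only [comap_adj, Function.Embedding.coe_subtype]
        exact hadj.symm
      exact this.reachable
  intro x y
  exact (hkey x).trans (hkey y).symm

lemma induce_singleton_connected {V : Type*} (G : SimpleGraph V) (a : V) :
    (G.induce {a}).Connected :=
  induce_star_connected G {a} a rfl (fun t ht => Or.inl ht)

lemma drop_last_two {X : Type*} {B : SimpleGraph X} :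
    ∀ {s t : X} (p : B.Walk s t), 2 ≤ p.length →
    ∃ (b c : X) (r : B.Walk s b), B.Adj b c ∧ B.Adj c t ∧
      p.support = r.support ++ [c, t] := by
  intro s t p
  induction p with
  | nil => intro h; simp at h
  | @cons s m t h p1 ih =>
    intro hl
    by_cases hl1 : 2 ≤ p1.length
    · obtain ⟨b, c, r, hbc, hct, hsup⟩ := ih hl1
      refine ⟨b, c, Walk.cons h r, hbc, hct, ?_⟩
      simp only [Walk.support_cons, hsup]
      rfl
    · cases p1 with
      | nil => simp at hl
      | @cons m m2 t h2 p2 =>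
        cases p2 with
        | nil =>
          exact ⟨s, m, Walk.nil, h, h2, by simp⟩
        | cons h3 p3 =>
          exfalso
          apply hl1
          simp only [Walk.length_cons]
          omega

lemma bip_acyclic_core {V : Type*} {G : SimpleGraph V}
    (hG : ¬ IsMinorOf (completeBipartiteGraph (Fin 3) (Fin 3)) G)
    {u v w : V} (hu : G.Adj v u) (hw : G.Adj v w) (huw : u ≠ w)
    (S T X3 : Set V)
    (hST : Disjoint S T) (hSX3 : Disjoint S X3) (hTX3 : Disjoint T X3)
    (hSu : ∀ a ∈ S, G.Adj u a) (hX3w : ∀ a ∈ X3, G.Adj w a)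
    (hTnbr : ∀ a ∈ T, ∃ b ∈ X3, G.Adj a b)
    (hS_ne : ∀ a ∈ S, a ≠ u ∧ a ≠ v ∧ a ≠ w)
    (hT_ne : ∀ a ∈ T, a ≠ u ∧ a ≠ v ∧ a ≠ w)
    (hX3_ne : ∀ a ∈ X3, a ≠ u ∧ a ≠ v ∧ a ≠ w) :
    (bipBetween G S T).IsAcyclic := by
  classical
  set B := bipBetween G S T with hB
  have hsideTS : ∀ {x y : ↑(S ∪ T)}, B.Adj x y → (↑x : V) ∈ T → (↑y : V) ∈ S := by
    rintro x y ⟨-, ⟨hx, hy⟩ | ⟨hx, hy⟩⟩ hxT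
    · exact absurd hxT (Set.disjoint_left.mp hST hx)
    · exact hy
  have hsideST : ∀ {x y : ↑(S ∪ T)}, B.Adj x y → (↑x : V) ∈ S → (↑y : V) ∈ T := by
    rintro x y ⟨-, ⟨hx, hy⟩ | ⟨hx, hy⟩⟩ hxS
    · exact hy
    · exact absurd hxS (Set.disjoint_right.mp hST hx)
  suffices inner : ∀ (y1 : ↑(S ∪ T)) (c : B.Walk y1 y1), c.IsCycle → (↑y1 : V) ∈ T → False by
    intro a0 c0 hc0
    cases c0 with
    | nil => exact hc0.ne_nil rfl
    | @cons _ b0 _ h1 p =>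
      rcases h1.2 with ⟨ha, hb⟩ | ⟨ha, hb⟩
      · have hmem : b0 ∈ (Walk.cons h1 p).support := by
          simp [Walk.support_cons, Walk.start_mem_support]
        exact inner b0 ((Walk.cons h1 p).rotate b0 hmem) (hc0.rotate hmem) hb
      · exact inner a0 (Walk.cons h1 p) hc0 ha
  intro y1 c hc hy1T
  cases c with
  | nil => exact hc.ne_nil rfl
  | @cons _ z1 _ h1 p =>
    have hz1S : (↑z1 : V) ∈ S := hsideTS h1 hy1T
    have hcons := (Walk.cons_isCycle_iff p h1).mp hc
    have hppath : p.IsPath := hcons.1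
    have hlen : 3 ≤ (Walk.cons h1 p).length := hc.three_le_length
    rw [Walk.length_cons] at hlen
    cases p with
    | nil => simp at hlen
    | @cons _ a1 _ h2 q =>
      have ha1T : (↑a1 : V) ∈ T := hsideST h2 hz1S
      have hqpath : q.IsPath := hppath.of_cons
      have hz1q : z1 ∉ q.support := by
        have hnd := hppath.support_nodup
        rw [Walk.support_cons, List.nodup_cons] at hnd
        exact hnd.1
      rw [Walk.length_cons] at hlen
      by_cases hql : 2 ≤ q.length
      swap
      · -- q has length exactly 1, giving a triangle; contradiction with bipartiteness
        cases q with
        | nil => simp at hlen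
        | @cons _ m _ h3 q2 =>
          cases q2 with
          | nil =>
            exact Set.disjoint_left.mp hST (hsideTS h3 ha1T) hy1T
          | cons h4 q3 =>
            exfalso
            apply hql
            simp only [Walk.length_cons]
            omega
      · obtain ⟨b, c2, r, hbc, hcy, hsup⟩ := drop_last_two q hql
        -- r : B.Walk a1 b
        have hc2S : (↑c2 : V) ∈ S := hsideTS hcy.symm hy1T
        have hbT : (↑b : V) ∈ T := hsideST hbc.symm hc2S
        -- nodup facts along q
        have hqnd := hqpath.support_nodup
        rw [hsup] at hqnd
        have hy1r : y1 ∉ r.support := by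
          intro hmem
          have := List.disjoint_of_nodup_append hqnd
          exact this hmem (by simp)
        have hc2r : c2 ∉ r.support := by
          intro hmem
          have := List.disjoint_of_nodup_append hqnd
          exact this hmem (by simp)
        have hz1r : z1 ∉ r.support := fun hmem => hz1q (by rw [hsup]; exact List.mem_append_left _ hmem)
        have hz1c2 : z1 ≠ c2 := fun heq => hz1q (by rw [hsup, heq]; simp)
        -- X3 neighbours of y1 and a1
        obtain ⟨x1, hx1X3, hyx1⟩ := hTnbr _ hy1T
        obtain ⟨x2, hx2X3, hax2⟩ := hTnbr _ ha1T
        -- map the arc into G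
        let ι : B →g G := ⟨Subtype.val, fun h => h.1⟩
        let rg := r.map ι
        have hrgsup : ∀ t : V, t ∈ rg.support ↔ ∃ t' ∈ r.support, (↑t' : V) = t := by
          intro t
          show t ∈ (r.map ι).support ↔ _
          rw [Walk.support_map]
          exact List.mem_map
        set Arc : Set V := {t | t ∈ rg.support} with hArc
        set Wb : Set V := {v, w, x1, x2} with hWb
        set φ : Fin 3 ⊕ Fin 3 → Set V :=
          Sum.elim ![{(↑z1 : V)}, {(↑c2 : V)}, Wb] ![{(↑y1 : V)}, Arc, {u}] with hφ
        apply hG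
        refine ⟨φ, ?_, ?_, ?_⟩
        · -- connectivity
          rintro (i | i) <;> fin_cases i
          · exact induce_singleton_connected G _
          · exact induce_singleton_connected G _
          · refine induce_star_connected G Wb w (by simp [hWb]) ?_
            rintro t (rfl | rfl | rfl | rfl)
            · exact Or.inr hw.symm
            · exact Or.inl rfl
            · exact Or.inr (hX3w _ hx1X3)
            · exact Or.inr (hX3w _ hx2X3)
          · exact induce_singleton_connected G _
          · exact rg.connected_induce_support
          · exact induce_singleton_connected G _
        · -- pairwise disjointness
          have hval : ∀ {t t' : ↑(S ∪ T)}, (↑t : V) = ↑t' → t = t' := fun h => Subtype.ext h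
          have hz1c2' : (↑z1 : V) ≠ ↑c2 := fun h => hz1c2 (hval h)
          have hz1y1' : (↑z1 : V) ≠ ↑y1 := fun h => Set.disjoint_left.mp hST (h ▸ hz1S) hy1T
          have hc2y1' : (↑c2 : V) ≠ ↑y1 := fun h => Set.disjoint_left.mp hST (h ▸ hc2S) hy1T
          have hz1u : (↑z1 : V) ≠ u := (hS_ne _ hz1S).1
          have hc2u : (↑c2 : V) ≠ u := (hS_ne _ hc2S).1
          have hy1u : (↑y1 : V) ≠ u := (hT_ne _ hy1T).1
          have hz1Wb : (↑z1 : V) ∉ Wb := by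
            rintro (h | h | h | h)
            · exact (hS_ne _ hz1S).2.1 h
            · exact (hS_ne _ hz1S).2.2 h
            · exact Set.disjoint_left.mp hSX3 hz1S (h ▸ hx1X3)
            · exact Set.disjoint_left.mp hSX3 hz1S (h ▸ hx2X3)
          have hc2Wb : (↑c2 : V) ∉ Wb := by
            rintro (h | h | h | h)
            · exact (hS_ne _ hc2S).2.1 h
            · exact (hS_ne _ hc2S).2.2 h
            · exact Set.disjoint_left.mp hSX3 hc2S (h ▸ hx1X3)
            · exact Set.disjoint_left.mp hSX3 hc2S (h ▸ hx2X3)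
          have hy1Wb : (↑y1 : V) ∉ Wb := by
            rintro (h | h | h | h)
            · exact (hT_ne _ hy1T).2.1 h
            · exact (hT_ne _ hy1T).2.2 h
            · exact Set.disjoint_left.mp hTX3 hy1T (h ▸ hx1X3)
            · exact Set.disjoint_left.mp hTX3 hy1T (h ▸ hx2X3)
          have huWb : u ∉ Wb := by
            rintro (h | h | h | h)
            · exact hu.ne' h
            · exact huw h
            · exact (hX3_ne _ hx1X3).1 h.symm
            · exact (hX3_ne _ hx2X3).1 h.symm
          have hArcS : ∀ t ∈ Arc, t ∈ S ∪ T := by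
            intro t ht
            obtain ⟨t', _, rfl⟩ := (hrgsup t).mp ht
            exact t'.2
          have hz1Arc : (↑z1 : V) ∉ Arc := by
            intro h
            obtain ⟨t', ht', heq⟩ := (hrgsup _).mp h
            exact hz1r (hval heq ▸ ht')
          have hc2Arc : (↑c2 : V) ∉ Arc := by
            intro h
            obtain ⟨t', ht', heq⟩ := (hrgsup _).mp h
            exact hc2r (hval heq ▸ ht')
          have hy1Arc : (↑y1 : V) ∉ Arc := by
            intro h
            obtain ⟨t', ht', heq⟩ := (hrgsup _).mp h
            exact hy1r (hval heq ▸ ht')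
          have huArc : u ∉ Arc := by
            intro h
            rcases hArcS _ h with h' | h'
            · exact (hS_ne _ h').1 rfl
            · exact (hT_ne _ h').1 rfl
          have hWbArc : Disjoint Wb Arc := by
            rw [Set.disjoint_left]
            intro t htWb htArc
            rcases hArcS _ htArc with h' | h' <;> rcases htWb with rfl | rfl | rfl | rfl
            · exact (hS_ne _ h').2.1 rfl
            · exact (hS_ne _ h').2.2 rfl
            · exact Set.disjoint_left.mp hSX3 h' hx1X3
            · exact Set.disjoint_left.mp hSX3 h' hx2X3
            · exact (hT_ne _ h').2.1 rfl
            · exact (hT_ne _ h').2.2 rfl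
            · exact Set.disjoint_left.mp hTX3 h' hx1X3
            · exact Set.disjoint_left.mp hTX3 h' hx2X3
          intro i j hij
          rcases i with i | i <;> rcases j with j | j <;> fin_cases i <;> fin_cases j <;>
            first
            | exact absurd rfl hij
            | exact Set.disjoint_singleton.mpr hz1c2'
            | exact Set.disjoint_singleton.mpr hz1c2'.symm
            | exact Set.disjoint_singleton.mpr hz1y1'
            | exact Set.disjoint_singleton.mpr hz1y1'.symm
            | exact Set.disjoint_singleton.mpr hc2y1'
            | exact Set.disjoint_singleton.mpr hc2y1'.symm
            | exact Set.disjoint_singleton.mpr hz1u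
            | exact Set.disjoint_singleton.mpr hz1u.symm
            | exact Set.disjoint_singleton.mpr hc2u
            | exact Set.disjoint_singleton.mpr hc2u.symm
            | exact Set.disjoint_singleton.mpr hy1u
            | exact Set.disjoint_singleton.mpr hy1u.symm
            | exact Set.disjoint_singleton_left.mpr hz1Wb
            | exact Set.disjoint_singleton_right.mpr hz1Wb
            | exact Set.disjoint_singleton_left.mpr hc2Wb
            | exact Set.disjoint_singleton_right.mpr hc2Wb
            | exact Set.disjoint_singleton_left.mpr hy1Wb
            | exact Set.disjoint_singleton_right.mpr hy1Wb
            | exact Set.disjoint_singleton_left.mpr huWb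
            | exact Set.disjoint_singleton_right.mpr huWb
            | exact Set.disjoint_singleton_left.mpr hz1Arc
            | exact Set.disjoint_singleton_right.mpr hz1Arc
            | exact Set.disjoint_singleton_left.mpr hc2Arc
            | exact Set.disjoint_singleton_right.mpr hc2Arc
            | exact Set.disjoint_singleton_left.mpr hy1Arc
            | exact Set.disjoint_singleton_right.mpr hy1Arc
            | exact Set.disjoint_singleton_left.mpr huArc
            | exact Set.disjoint_singleton_right.mpr huArc
            | exact hWbArc
            | exact hWbArc.symm
        · -- adjacency
          have key9 : ∀ i j : Fin 3, ∃ x ∈ φ (Sum.inl i), ∃ y ∈ φ (Sum.inr j), G.Adj x y := by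
            intro i j
            fin_cases i <;> fin_cases j
            · exact ⟨↑z1, rfl, ↑y1, rfl, h1.1.symm⟩
            · exact ⟨↑z1, rfl, ↑a1, (hrgsup _).mpr ⟨a1, r.start_mem_support, rfl⟩, h2.1⟩
            · exact ⟨↑z1, rfl, u, rfl, (hSu _ hz1S).symm⟩
            · exact ⟨↑c2, rfl, ↑y1, rfl, hcy.1⟩
            · exact ⟨↑c2, rfl, ↑b, (hrgsup _).mpr ⟨b, r.end_mem_support, rfl⟩, hbc.1.symm⟩
            · exact ⟨↑c2, rfl, u, rfl, (hSu _ hc2S).symm⟩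
            · exact ⟨x1, show x1 ∈ Wb by simp [hWb], ↑y1, rfl, hyx1.symm⟩
            · exact ⟨x2, show x2 ∈ Wb by simp [hWb], ↑a1, (hrgsup _).mpr ⟨a1, r.start_mem_support, rfl⟩, hax2.symm⟩
            · exact ⟨v, show v ∈ Wb by simp [hWb], u, rfl, hu⟩
          rintro (i | i) (j | j) hadj
          · simp [completeBipartiteGraph] at hadj
          · exact key9 i j
          · obtain ⟨x, hx, y, hy, hxy⟩ := key9 j i
            exact ⟨y, hy, x, hx, hxy.symm⟩
          · simp [completeBipartiteGraph] at hadj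


lemma bip_flip {V : Type*} (G : SimpleGraph V) (S T : Set V)
    (h : (bipBetween G S T).IsAcyclic) : (bipBetween G T S).IsAcyclic := by
  have e : bipBetween G T S ≃g bipBetween G S T :=
    { Equiv.setCongr (Set.union_comm T S) with
      map_rel_iff' := by
        intro a b
        constructor
        · rintro ⟨h1, h2⟩
          exact ⟨h1, h2.symm⟩
        · rintro ⟨h1, h2⟩
          exact ⟨h1, h2.symm⟩ }
  intro a c hc
  exact h (c.map e.toHom)
    ((Walk.map_isCycle_iff_of_injective (fun x y hxy => e.toEquiv.injective hxy)).mpr hc)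

lemma ncard_prod' {α β : Type*} (s : Set α) (t : Set β) :
    (s ×ˢ t).ncard = s.ncard * t.ncard := by
  rw [← Nat.card_coe_set_eq, ← Nat.card_coe_set_eq, ← Nat.card_coe_set_eq,
    Nat.card_congr (Equiv.Set.prod s t), Nat.card_prod]

lemma master_count {V : Type*} [Fintype V] {G : SimpleGraph V} {u v w : V}
    (hu : G.Adj v u) (hw : G.Adj v w) (huw : u ≠ w)
    (hforest : (bipBetween G (X1set G u v w) (X2set G u v w)).IsAcyclic) :
    {s : Finset V | IsIndCycle G 6 s ∧ u ∈ s ∧ v ∈ s ∧ w ∈ s}.ncard ≤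
      (X3set G u v w).ncard * ((X1set G u v w).ncard + (X2set G u v w).ncard - 1) := by
  classical
  set X1 := X1set G u v w
  set X2 := X2set G u v w
  set X3 := X3set G u v w
  set C : Set (Finset V) := {s : Finset V | IsIndCycle G 6 s ∧ u ∈ s ∧ v ∈ s ∧ w ∈ s} with hC
  rcases Set.eq_empty_or_nonempty C with hCe | ⟨s0, hs0⟩
  · simp [hCe]
  -- nonemptiness of X1 and X2
  obtain ⟨t0, hd0⟩ := struct hu hw huw hs0.1 hs0.2.1 hs0.2.2.1 hs0.2.2.2
  have hmem0 := decomp_mem hs0.1 hs0.2.1 hs0.2.2.1 hs0.2.2.2 hd0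
  have hX1ne : (X1 ∪ X2).Nonempty := ⟨t0.2.2, Or.inl hmem0.2.2⟩
  -- the injection
  set Epairs : Set (V × V) := {p | p.1 ∈ X2 ∧ p.2 ∈ X1 ∧ G.Adj p.2 p.1} with hEp
  set P : Set (V × (V × V)) := X3 ×ˢ Epairs with hP
  set F : Finset V → V × (V × V) := fun s =>
    if h : s ∈ C then (struct hu hw huw h.1 h.2.1 h.2.2.1 h.2.2.2).choose else (u, u, u)
    with hF
  have hFd : ∀ s (h : s ∈ C), Decomp G u v w s (F s) := by
    intro s h
    rw [hF]
    simp only [dif_pos h]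
    exact (struct hu hw huw h.1 h.2.1 h.2.2.1 h.2.2.2).choose_spec
  have hmaps : ∀ s ∈ C, F s ∈ P := by
    intro s h
    have hd := hFd s h
    have hm := decomp_mem h.1 h.2.1 h.2.2.1 h.2.2.2 hd
    exact ⟨hm.1, hm.2.1, hm.2.2, hd.2.2.2.1⟩
  have hinj : Set.InjOn F C := by
    intro s1 h1 s2 h2 heq
    have hd1 := (hFd s1 h1).1
    have hd2 := (hFd s2 h2).1
    rw [hd1, hd2, heq]
  have step1 : C.ncard ≤ P.ncard :=
    Set.ncard_le_ncard_of_injOn F hmaps hinj P.toFinite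
  -- bound Epairs via the forest
  have : Nonempty ↑(X1 ∪ X2) := hX1ne.to_subtype
  set B := bipBetween G X1 X2 with hB
  set P' : Set (↑(X1 ∪ X2) × ↑(X1 ∪ X2)) := {p | B.Adj p.1 p.2 ∧ ↑p.1 ∈ X2 ∧ ↑p.2 ∈ X1}
    with hP'
  have hbound : P'.ncard + 1 ≤ Fintype.card ↑(X1 ∪ X2) := by
    apply forest_pairs_bound hforest P' (fun p hp => hp.1)
    rintro p ⟨-, hp2, hp3⟩ ⟨-, hq2, hq3⟩
    exact Set.disjoint_left.mp X1_disj_X2 hq3 hp2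
  have hEP' : Epairs = (fun p : ↑(X1 ∪ X2) × ↑(X1 ∪ X2) => ((↑p.1 : V), (↑p.2 : V))) '' P' := by
    ext ⟨y, z⟩
    constructor
    · rintro ⟨h1, h2, h3⟩
      refine ⟨(⟨y, Or.inr h1⟩, ⟨z, Or.inl h2⟩), ⟨⟨h3.symm, Or.inr ⟨h1, h2⟩⟩, h1, h2⟩, rfl⟩
    · rintro ⟨p, ⟨hadj, h1, h2⟩, heq⟩
      rw [Prod.ext_iff] at heq
      obtain ⟨he1, he2⟩ := heq
      subst he1
      subst he2
      exact ⟨h1, h2, hadj.1.symm⟩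
  have himg : Epairs.ncard = P'.ncard := by
    rw [hEP']
    apply Set.ncard_image_of_injective
    intro p q hpq
    obtain ⟨h1, h2⟩ := Prod.ext_iff.mp hpq
    exact Prod.ext (Subtype.ext h1) (Subtype.ext h2)
  have hcardU : Fintype.card ↑(X1 ∪ X2) = X1.ncard + X2.ncard := by
    rw [← Nat.card_eq_fintype_card, Nat.card_coe_set_eq,
      Set.ncard_union_eq X1_disj_X2 (Set.toFinite _) (Set.toFinite _)]
  have step2 : P.ncard = X3.ncard * Epairs.ncard := ncard_prod' X3 Epairs
  have step3 : Epairs.ncard ≤ X1.ncard + X2.ncard - 1 := by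
    rw [himg]
    omega
  calc C.ncard ≤ P.ncard := step1
    _ = X3.ncard * Epairs.ncard := step2
    _ ≤ X3.ncard * (X1.ncard + X2.ncard - 1) := Nat.mul_le_mul_left _ step3

theorem stmt2 {V : Type*} [Fintype V] (G : SimpleGraph V) (hG : G.Planar)
    (v u w : V) (huw : u ≠ w) (hu : G.Adj v u) (hw : G.Adj v w)
    (hex : ∃ s : Finset V, IsIndCycle G 6 s ∧ u ∈ s ∧ v ∈ s ∧ w ∈ s) :
    (bipBetween G (X1set G u v w) (X2set G u v w)).IsAcyclic ∧
    (bipBetween G (X2set G u v w) (X3set G u v w)).IsAcyclic ∧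
    {s : Finset V | IsIndCycle G 6 s ∧ u ∈ s ∧ v ∈ s ∧ w ∈ s}.ncard ≤
      (X3set G u v w).ncard * ((X1set G u v w).ncard + (X2set G u v w).ncard - 1) ∧
    {s : Finset V | IsIndCycle G 6 s ∧ u ∈ s ∧ v ∈ s ∧ w ∈ s}.ncard ≤
      (X1set G u v w).ncard * ((X2set G u v w).ncard + (X3set G u v w).ncard - 1) := by
  classical
  obtain ⟨hK5, hK33⟩ := hG
  have hXne : ∀ a ∈ Xset G u v w, a ≠ u ∧ a ≠ v ∧ a ≠ w := fun a ha => ⟨ha.1, ha.2.1, ha.2.2.1⟩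
  have acy1 : (bipBetween G (X1set G u v w) (X2set G u v w)).IsAcyclic := by
    apply bip_acyclic_core hK33 hu hw huw _ _ (X3set G u v w) X1_disj_X2
      (X1_disj_X3 hu hw huw) (X3_disj_X2.symm)
      (fun a ha => ha.2) (fun a ha => ha.2)
      (fun a ha => (X2_nbrs hu hw huw ha).2)
      (fun a ha => hXne a ha.1) (fun a ha => hXne a ha.1) (fun a ha => hXne a ha.1)
  have hXne' : ∀ a ∈ Xset G w v u, a ≠ w ∧ a ≠ v ∧ a ≠ u := fun a ha => ⟨ha.1, ha.2.1, ha.2.2.1⟩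
  have acy2' : (bipBetween G (X3set G u v w) (X2set G u v w)).IsAcyclic := by
    apply bip_acyclic_core hK33 hw hu huw.symm _ _ (X1set G u v w) X3_disj_X2
      ((X1_disj_X3 hu hw huw).symm) (X1_disj_X2.symm)
      (fun a ha => ha.2) (fun a ha => ha.2)
      (fun a ha => (X2_nbrs hu hw huw ha).1)
      (fun a ha => (hXne' a (Xset_comm (u := u) ▸ ha.1)))
      (fun a ha => (hXne' a (Xset_comm (u := u) ▸ ha.1)))
      (fun a ha => (hXne' a (Xset_comm (u := u) ▸ ha.1)))
  have acy2 : (bipBetween G (X2set G u v w) (X3set G u v w)).IsAcyclic :=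
    bip_flip G _ _ acy2'
  have cnt1 := master_count hu hw huw acy1
  have forest2 : (bipBetween G (X1set G w v u) (X2set G w v u)).IsAcyclic := by
    rw [X1_swap, X2_swap]
    exact acy2'
  have cnt2 := master_count hw hu huw.symm forest2
  rw [X1_swap, X2_swap] at cnt2
  have hX3sw : X3set G w v u = X1set G u v w := by
    rw [X3set, X1set, Xset_comm (u := w) (w := u)]
  rw [hX3sw] at cnt2
  have hCeq : {s : Finset V | IsIndCycle G 6 s ∧ w ∈ s ∧ v ∈ s ∧ u ∈ s} =
      {s : Finset V | IsIndCycle G 6 s ∧ u ∈ s ∧ v ∈ s ∧ w ∈ s} := by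
    ext s
    simp only [Set.mem_setOf_eq]
    tauto
  rw [hCeq] at cnt2
  refine ⟨acy1, acy2, cnt1, ?_⟩
  calc {s : Finset V | IsIndCycle G 6 s ∧ u ∈ s ∧ v ∈ s ∧ w ∈ s}.ncard
      ≤ (X1set G u v w).ncard * ((X3set G u v w).ncard + (X2set G u v w).ncard - 1) := cnt2
    _ = (X1set G u v w).ncard * ((X2set G u v w).ncard + (X3set G u v w).ncard - 1) := by
        rw [Nat.add_comm]
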